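/- Let k ≥ 1, let A be a unital C*-algebra, and let p : Fin k → Fin k → A be a family of projections such that ∑_b p a b = 1 for every a, and p a b · p a' b = 0 whenever a ≠ a'. Then ∑_a p a b = 1 for every b ∈ Fin k. -/
import Mathlib


/-- In a unital C*-algebra, if `p : Fin k → Fin k → A` (`k ≥ 1`) is a
family of projections whose rows sum to `1` and whose columns are orthogonal
(`p a b * p a' b = 0` for `a ≠ a'`), then each column also sums to `1`. -/
theorem stmt2 {A : Type*} [CStarAlgebra A] (k : ℕ) (hk : 1 ≤ k)
    (p : Fin k → Fin k → A)
    (hproj : ∀ a b, star (p a b) = p a b ∧ p a b * p a b = p a b)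
    (hsum : ∀ a : Fin k, ∑ b : Fin k, p a b = 1)
    (horth : ∀ (a a' : Fin k) (b : Fin k), a ≠ a' → p a b * p a' b = 0) :
    ∀ b : Fin k, ∑ a : Fin k, p a b = 1 := by
  let _ := CStarAlgebra.spectralOrder A
  have _ := CStarAlgebra.spectralOrderedRing A
  set q : Fin k → A := fun b => ∑ a, p a b with hq
  have hidem : ∀ b, q b * q b = q b := by
    intro b
    rw [hq]
    simp only [Finset.sum_mul, Finset.mul_sum]
    rw [Finset.sum_comm]
    rw [Finset.sum_congr rfl (fun a _ => Finset.sum_eq_single a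
      (fun a' _ hne => horth a a' b (Ne.symm hne)) (by simp))]
    exact Finset.sum_congr rfl fun a _ => (hproj a b).2
  have hsa : ∀ b, star (q b) = q b := by
    intro b; rw [hq]; simp only [star_sum]
    exact Finset.sum_congr rfl fun a _ => (hproj a b).1
  have hnn : ∀ b, (0 : A) ≤ 1 - q b := by
    intro b
    have h1 : (1 - q b) * (1 - q b) = 1 - q b := by
      rw [sub_mul, one_mul, mul_sub, mul_one, hidem b, sub_self, sub_zero]
    have h2 : star (1 - q b) = 1 - q b := by rw [star_sub, star_one, hsa]
    calc (0:A) ≤ star (1 - q b) * (1 - q b) := star_mul_self_nonneg _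
    _ = 1 - q b := by rw [h2, h1]
  have hzero : ∑ b : Fin k, (1 - q b) = 0 := by
    rw [Finset.sum_sub_distrib, Finset.sum_const, Finset.card_univ, Fintype.card_fin]
    rw [show ∑ b : Fin k, q b = ∑ a : Fin k, ∑ b : Fin k, p a b from Finset.sum_comm]
    simp [hsum]
  intro b
  have := (Finset.sum_eq_zero_iff_of_nonneg (fun b _ => hnn b)).mp hzero b (Finset.mem_univ b)
  exact (sub_eq_zero.mp this).symm
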